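/- For all real p ≥ 0, if Z is a standard normal random variable then (p/e)^{p/2} ≤ E|Z|^p ≤ √2 · (p/e)^{p/2}. -/

import Mathlib

open MeasureTheory ProbabilityTheory

open Real Set


noncomputable def phi (x : ℝ) : ℝ := Real.log (Real.Gamma (x + 1/2)) - x * Real.log x + x

lemma log_pi_lb : 1.13 < Real.log π := by
  have h1 : Real.log π = 1 + Real.log (π / Real.exp 1) := by
    rw [Real.log_div pi_ne_zero (Real.exp_ne_zero 1), Real.log_exp]; ring
  have h2 : Real.log (π / Real.exp 1) ≥ 1 - Real.exp 1 / π := by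
    have hpos : (0:ℝ) < π / Real.exp 1 := by positivity
    have := Real.log_le_sub_one_of_pos (show (0:ℝ) < Real.exp 1 / π by positivity)
    have hinv : Real.log (Real.exp 1 / π) = - Real.log (π / Real.exp 1) := by
      rw [← Real.log_inv]; congr 1; field_simp
    nlinarith [this, hinv]
  have he : Real.exp 1 < 2.7182818286 := Real.exp_one_lt_d9
  have hp : (3.141592:ℝ) < π := Real.pi_gt_d6
  have : Real.exp 1 / π < 0.87 := by
    rw [div_lt_iff₀ (by linarith)]
    nlinarith
  linarith
lemma log_pi_ub : Real.log π < 1.16 := by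
  have h1 : Real.log π = 1 + Real.log (π / Real.exp 1) := by
    rw [Real.log_div pi_ne_zero (Real.exp_ne_zero 1), Real.log_exp]; ring
  have h2 := Real.log_le_sub_one_of_pos (show (0:ℝ) < π / Real.exp 1 by positivity)
  have he : (2.7182818283:ℝ) < Real.exp 1 := Real.exp_one_gt_d9
  have hp : π < 3.141593 := Real.pi_lt_d6
  have : π / Real.exp 1 < 1.156 := by
    rw [div_lt_iff₀ (by linarith)]
    nlinarith
  linarith

lemma Gamma_three_halves : Real.Gamma (3/2) = Real.sqrt π / 2 := by
  have : Real.Gamma (1/2 + 1) = (1/2) * Real.Gamma (1/2) := Real.Gamma_add_one (by norm_num)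
  rw [show (3:ℝ)/2 = 1/2 + 1 by norm_num, this, Real.Gamma_one_half_eq]
  ring

lemma Gamma_two' : Real.Gamma 2 = 1 := by
  have h : Real.Gamma (1 + 1) = 1 * Real.Gamma 1 := Real.Gamma_add_one one_ne_zero
  rw [show (2:ℝ) = 1 + 1 by norm_num, h, Real.Gamma_one, one_mul]

lemma midpoint_log (x : ℝ) (hx : 0 < x) :
    (x+1) * Real.log (x+1) - x * Real.log x - 1 ≤ Real.log (x + 1/2) := by
  have hm : 0 < x + 1/2 := by linarith
  have h0 : (0:ℝ) ∉ uIcc x (x+1) := by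
    rw [uIcc_of_le (by linarith)]
    simp only [mem_Icc, not_and_or, not_le]
    left; exact hx
  have hInt1 : IntervalIntegrable Real.log volume x (x+1) := intervalIntegral.intervalIntegrable_log h0
  have hInt2 : IntervalIntegrable (fun t => Real.log (x+1/2) - 1 + t / (x+1/2)) volume x (x+1) :=
    (Continuous.intervalIntegrable (by continuity) _ _)
  have hle : ∀ t ∈ Icc x (x+1), Real.log t ≤ Real.log (x+1/2) - 1 + t / (x+1/2) := by
    intro t ht
    rcases ht with ⟨ht1, ht2⟩
    have htpos : 0 < t := lt_of_lt_of_le hx ht1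
    have h1 : Real.log t - Real.log (x+1/2) = Real.log (t / (x+1/2)) := by
      rw [Real.log_div (ne_of_gt htpos) (ne_of_gt hm)]
    have h2 : Real.log (t / (x+1/2)) ≤ t / (x+1/2) - 1 :=
      Real.log_le_sub_one_of_pos (by positivity)
    linarith
  have hmono := intervalIntegral.integral_mono_on (by linarith : x ≤ x + 1) hInt1 hInt2 hle
  rw [integral_log] at hmono
  have hrhs : ∫ t in x..(x+1), (Real.log (x+1/2) - 1 + t / (x+1/2))
      = Real.log (x+1/2) := by
    rw [intervalIntegral.integral_add ((Continuous.intervalIntegrable (by continuity) _ _))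
      ((Continuous.intervalIntegrable (by continuity) _ _))]
    rw [intervalIntegral.integral_const]
    rw [intervalIntegral.integral_div, integral_id]
    field_simp
    ring
  rw [hrhs] at hmono
  linarith

lemma phi_step {x : ℝ} (hx : 0 < x) : phi x ≤ phi (x+1) := by
  have hm : (0:ℝ) < x + 1/2 := by linarith
  have hG : Real.Gamma (x + 1 + 1/2) = (x + 1/2) * Real.Gamma (x + 1/2) := by
    rw [show x + 1 + 1/2 = (x + 1/2) + 1 by ring, Real.Gamma_add_one (ne_of_gt hm)]
  unfold phi
  rw [hG, Real.log_mul (ne_of_gt hm) (Real.Gamma_pos_of_pos (by linarith)).ne']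
  have := midpoint_log x hx
  linarith

lemma logGamma_S1 {x : ℝ} (hx : 0 ≤ x) :
    (Real.log π)/2 - Real.log 2 + x * (Real.log π - 2 * Real.log 2)
      ≤ Real.log (Real.Gamma (x + 3/2)) := by
  have hval : Real.log (Real.Gamma (3/2)) = (Real.log π)/2 - Real.log 2 := by
    rw [Gamma_three_halves, Real.log_div (by positivity) (by norm_num),
      Real.log_sqrt pi_pos.le]
  rcases eq_or_lt_of_le hx with h | h
  · rw [← h, zero_add, zero_mul, add_zero, hval]
  · have hs := ConvexOn.slope_mono_adjacent Real.convexOn_log_Gamma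
      (mem_Ioi.mpr one_pos) (mem_Ioi.mpr (by linarith : (0:ℝ) < x + 3/2))
      (by norm_num : (1:ℝ) < 3/2) (by linarith : (3:ℝ)/2 < x + 3/2)
    simp only [Function.comp_apply] at hs
    rw [Real.Gamma_one, Real.log_one, hval] at hs
    have h32 : ((3:ℝ)/2 - 1) = 1/2 := by norm_num
    have h2 : (x + 3/2 - 3/2) = x := by ring
    rw [h32, h2, div_le_div_iff₀ (by norm_num) h] at hs
    nlinarith [hs]
  
lemma logGamma_S2 {x : ℝ} (hx : 1/2 ≤ x) :
    (x - 1/2) * (2 * Real.log 2 - Real.log π) ≤ Real.log (Real.Gamma (x + 3/2)) := by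
  have hval : Real.log (Real.Gamma (3/2)) = (Real.log π)/2 - Real.log 2 := by
    rw [Gamma_three_halves, Real.log_div (by positivity) (by norm_num),
      Real.log_sqrt pi_pos.le]
  rcases eq_or_lt_of_le hx with h | h
  · rw [← h, show (1:ℝ)/2 + 3/2 = 2 by norm_num, Gamma_two', Real.log_one]
    norm_num
  · have hs := ConvexOn.slope_mono_adjacent Real.convexOn_log_Gamma
      (mem_Ioi.mpr (by norm_num : (0:ℝ) < 3/2)) (mem_Ioi.mpr (by linarith : (0:ℝ) < x + 3/2))
      (by norm_num : (3:ℝ)/2 < 2) (by linarith : (2:ℝ) < x + 3/2)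
    simp only [Function.comp_apply] at hs
    rw [Gamma_two', Real.log_one, hval] at hs
    have e1 : ((2:ℝ) - 3/2) = 1/2 := by norm_num
    have e2 : (x + 3/2 - 2) = x - 1/2 := by ring
    rw [e1, e2] at hs
    have hpos : (0:ℝ) < x - 1/2 := by linarith
    rw [div_le_div_iff₀ (by norm_num) hpos] at hs
    nlinarith [hs]

lemma log2_lb : (0.6931471803:ℝ) < Real.log 2 := Real.log_two_gt_d9
lemma log2_ub : Real.log 2 < 0.6931471808 := Real.log_two_lt_d9

lemma phi_base {x : ℝ} (hx : 0 < x) (hx1 : x ≤ 1) : (Real.log π)/2 ≤ phi x := by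
  set L := Real.log π with hL
  set l2 := Real.log 2 with hl2
  have hLlb : (1.13:ℝ) < L := log_pi_lb
  have hLub : L < 1.16 := log_pi_ub
  have hl2lb : (0.6931471803:ℝ) < l2 := log2_lb
  have hl2ub : l2 < 0.6931471808 := log2_ub
  have hm : (0:ℝ) < x + 1/2 := by linarith
  -- phi x = log Γ(x+3/2) - log (x+1/2) - x log x + x
  have hsplit : phi x = Real.log (Real.Gamma (x + 3/2)) - Real.log (x + 1/2)
      - x * Real.log x + x := by
    unfold phi
    have hG : Real.Gamma (x + 3/2) = (x + 1/2) * Real.Gamma (x + 1/2) := by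
      rw [show x + 3/2 = (x + 1/2) + 1 by ring, Real.Gamma_add_one (ne_of_gt hm)]
    rw [hG, Real.log_mul (ne_of_gt hm) (Real.Gamma_pos_of_pos (by linarith)).ne']
    ring
  rcases le_or_gt x (1/2) with hhalf | hhalf
  · -- use S1
    have hS1 := logGamma_S1 hx.le
    have hlog : Real.log (x + 1/2) = Real.log (2*x + 1) - l2 := by
      rw [show x + 1/2 = (2*x+1)/2 by ring, Real.log_div (by linarith) (by norm_num)]
    rw [hsplit, hlog]
    -- suffices : x * (L - 2*l2 + 1) ≥ log(2x+1) + x * log x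
    have key : Real.log (2*x+1) + x * Real.log x ≤ x * (L - 2*l2 + 1) := by
      rcases le_or_gt x (1/4) with hq | hq
      · have h1 : Real.log (2*x+1) ≤ 2*x := by
          have := Real.log_le_sub_one_of_pos (show (0:ℝ) < 2*x+1 by linarith)
          linarith
        have h2 : Real.log x ≤ -(2*l2) := by
          have : Real.log x ≤ Real.log (1/4) := Real.log_le_log hx hq
          rw [show (1:ℝ)/4 = (2^2)⁻¹ by norm_num, Real.log_inv, Real.log_pow] at this
          push_cast at this
          linarith
        have h3 : x * Real.log x ≤ x * (-(2*l2)) := by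
          exact mul_le_mul_of_nonneg_left h2 hx.le
        nlinarith
      · have h1 : Real.log (2*x+1) ≤ l2 + x - 1/2 := by
          have h := Real.log_le_sub_one_of_pos (show (0:ℝ) < (2*x+1)/2 by linarith)
          have : Real.log ((2*x+1)/2) = Real.log (2*x+1) - l2 :=
            Real.log_div (by linarith) (by norm_num)
          rw [this] at h
          linarith
        have h2 : x * Real.log x ≤ -(l2/2) := by
          have hc := Real.convexOn_mul_log.2 (mem_Ici.mpr (by norm_num : (0:ℝ) ≤ 1/4))
            (mem_Ici.mpr (by norm_num : (0:ℝ) ≤ 1/2))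
            (by linarith : (0:ℝ) ≤ 2 - 4*x) (by linarith : (0:ℝ) ≤ 4*x - 1)
            (by ring : (2 - 4*x) + (4*x - 1) = 1)
          have hx' : (2 - 4*x) • (1/4:ℝ) + (4*x - 1) • (1/2:ℝ) = x := by
            simp only [smul_eq_mul]; ring
          rw [hx'] at hc
          simp only [smul_eq_mul] at hc
          have e14 : Real.log (1/4) = -(2*l2) := by
            rw [show (1:ℝ)/4 = (2^2)⁻¹ by norm_num, Real.log_inv, Real.log_pow]
            push_cast; ring
          have e12 : Real.log (1/2) = -l2 := by
            rw [show (1:ℝ)/2 = 2⁻¹ by norm_num, Real.log_inv]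
          rw [e14, e12] at hc
          nlinarith [hc]
        nlinarith
    nlinarith [hS1]
  · -- use S2
    have hS2 := logGamma_S2 hhalf.le
    have h1 : Real.log (x + 1/2) ≤ x - 1/2 := by
      have := Real.log_le_sub_one_of_pos hm
      linarith
    have h2 : x * Real.log x ≤ x^2 - x := by
      have := Real.log_le_sub_one_of_pos hx
      nlinarith
    rw [hsplit]
    nlinarith [hS2, mul_nonneg (by linarith : (0:ℝ) ≤ x - 1/2) (by linarith : (0:ℝ) ≤ 1 - x)]

lemma phi_base_n (n : ℕ) : ∀ x : ℝ, 0 < x → x ≤ 1 → (Real.log π)/2 ≤ phi (x + n) := by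
  induction n with
  | zero => intro x hx hx1; simpa using phi_base hx hx1
  | succ n ih =>
    intro x hx hx1
    have h := phi_step (show (0:ℝ) < x + n by positivity)
    have := ih x hx hx1
    push_cast
    calc (Real.log π)/2 ≤ phi (x + n) := this
      _ ≤ phi (x + n + 1) := h
      _ = phi (x + (n + 1)) := by ring_nf

lemma phi_lower {x : ℝ} (hx : 0 < x) : (Real.log π)/2 ≤ phi x := by
  have hceil : 1 ≤ ⌈x⌉₊ := Nat.one_le_ceil_iff.mpr hx
  set n : ℕ := ⌈x⌉₊ - 1 with hn
  have hcast : (n : ℝ) = (⌈x⌉₊ : ℝ) - 1 := by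
    rw [hn]; push_cast [Nat.cast_sub hceil]; ring
  set r : ℝ := x - n with hr
  have hr1 : r ≤ 1 := by
    have := Nat.le_ceil x
    rw [hr, hcast]; linarith
  have hr0 : 0 < r := by
    have := Nat.ceil_lt_add_one hx.le
    rw [hr, hcast]; linarith
  have := phi_base_n n r hr0 hr1
  have hxe : r + n = x := by rw [hr]; ring
  rwa [hxe] at this

set_option maxHeartbeats 1000000 in
lemma phi_chord (m : ℕ) (hm : 1 ≤ m) {y : ℝ} (hy : 0 < y)
    (h1 : (m:ℝ) ≤ y + 1/2) (h2 : y + 1/2 ≤ m + 1) :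
    phi y ≤ Real.log (Real.sqrt 2 * Stirling.stirlingSeq m) := by
  have hmpos : (0:ℝ) < m := by exact_mod_cast hm
  set t : ℝ := y + 1/2 - m with ht
  have ht0 : 0 ≤ t := by simp only [ht]; linarith
  have ht1 : t ≤ 1 := by simp only [ht]; linarith
  -- chord bound for log Gamma
  have hc := Real.convexOn_log_Gamma.2 (mem_Ioi.mpr hmpos)
      (mem_Ioi.mpr (by linarith : (0:ℝ) < m + 1))
      (by linarith : (0:ℝ) ≤ 1 - t) ht0 (by ring : (1 - t) + t = 1)
  have hcomb : (1 - t) • (m:ℝ) + t • ((m:ℝ) + 1) = y + 1/2 := by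
    simp only [smul_eq_mul]; ring
  rw [hcomb] at hc
  simp only [Function.comp_apply, smul_eq_mul] at hc
  -- Gamma values at integers
  have hGm1 : Real.Gamma ((m:ℝ) + 1) = Nat.factorial m := Real.Gamma_nat_eq_factorial m
  have hGm : Real.Gamma (m:ℝ) = Nat.factorial (m - 1) := by
    have := Real.Gamma_nat_eq_factorial (m - 1)
    rw [show ((m - 1 : ℕ):ℝ) + 1 = (m:ℝ) by
      rw [Nat.cast_sub hm]; push_cast; ring] at this
    exact this
  have hfact : (Nat.factorial m : ℝ) = m * Nat.factorial (m - 1) := by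
    conv_lhs => rw [show m = (m-1) + 1 by omega]
    rw [Nat.factorial_succ]
    push_cast [Nat.cast_sub hm]
    ring
  have hfpos : (0:ℝ) < Nat.factorial (m-1) := by positivity
  have hlogm1 : Real.log (Nat.factorial m : ℝ)
      = Real.log m + Real.log (Nat.factorial (m-1) : ℝ) := by
    rw [hfact, Real.log_mul (by positivity) (by positivity)]
  rw [hGm1, hGm, hlogm1] at hc
  have hc2 : Real.log (Real.Gamma (y + 1/2))
      ≤ Real.log (Nat.factorial (m-1) : ℝ) + t * Real.log m := by nlinarith [hc]
  -- stirling formula for log factorial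
  set s : ℝ := Stirling.stirlingSeq m with hs
  have hspos : 0 < s := by
    rw [hs, show m = (m - 1) + 1 by omega]
    exact Stirling.stirlingSeq'_pos (m-1)
  have hstir : (Nat.factorial m : ℝ) = s * (Real.sqrt (2*m) * ((m:ℝ)/Real.exp 1)^m) := by
    rw [hs, Stirling.stirlingSeq]
    field_simp
  have hlogfact : Real.log (Nat.factorial m : ℝ)
      = Real.log s + (1/2) * (Real.log 2 + Real.log m) + m * (Real.log m - 1) := by
    rw [hstir, Real.log_mul hspos.ne' (by positivity),
      Real.log_mul (by positivity) (by positivity),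
      Real.log_sqrt (by positivity), Real.log_mul (by norm_num) (by positivity),
      Real.log_pow, Real.log_div (by positivity) (Real.exp_ne_zero 1), Real.log_exp]
    push_cast
    ring
  have hlogf1 : Real.log (Nat.factorial (m-1) : ℝ)
      = Real.log s + (1/2) * (Real.log 2 + Real.log m) + m * (Real.log m - 1)
        - Real.log m := by
    rw [← hlogfact, hlogm1]; ring
  -- key pointwise bound log(m/y) ≤ m/y - 1
  have hkey : y * Real.log m - y * Real.log y ≤ m - y := by
    have hlog : Real.log ((m:ℝ)/y) ≤ (m:ℝ)/y - 1 :=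
      Real.log_le_sub_one_of_pos (by positivity)
    rw [Real.log_div (by positivity) hy.ne'] at hlog
    have := mul_le_mul_of_nonneg_left hlog hy.le
    have he : y * ((m:ℝ)/y - 1) = m - y := by field_simp
    nlinarith [this]
  -- assemble
  have hfin : phi y ≤ Real.log s + (1/2) * Real.log 2 := by
    unfold phi
    rw [ht] at hc2
    nlinarith [hc2, hlogf1, hkey]
  have : Real.log (Real.sqrt 2 * s) = (1/2) * Real.log 2 + Real.log s := by
    rw [Real.log_mul (by positivity) hspos.ne', Real.log_sqrt (by norm_num)]
    ring
  rw [this]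
  linarith

lemma phi_le_add_nat {x : ℝ} (hx : 0 < x) (n : ℕ) : phi x ≤ phi (x + n) := by
  induction n with
  | zero => simp
  | succ n ih =>
    have h := phi_step (show (0:ℝ) < x + n by positivity)
    push_cast
    calc phi x ≤ phi (x + n) := ih
      _ ≤ phi (x + n + 1) := h
      _ = phi (x + (n + 1)) := by ring_nf

lemma phi_upper {x : ℝ} (hx : 0 < x) : phi x ≤ Real.log 2 / 2 + Real.log π / 2 := by
  set k : ℕ := ⌊x + 1/2⌋₊ with hk
  have hbd : ∀ n : ℕ, phi x ≤ Real.log (Real.sqrt 2 * Stirling.stirlingSeq (n + (k+1))) := by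
    intro n
    have hy : (0:ℝ) < x + (n+1) := by positivity
    have hfl : (k:ℝ) ≤ x + 1/2 := Nat.floor_le (by linarith)
    have hfu : x + 1/2 < k + 1 := Nat.lt_floor_add_one _
    have hc := phi_chord (n + (k+1)) (by omega) hy (by push_cast; linarith)
      (by push_cast; linarith)
    calc phi x ≤ phi (x + (↑(n+1):ℝ)) := by
            have := phi_le_add_nat hx (n+1); push_cast at this ⊢; linarith
      _ ≤ _ := by push_cast at hc ⊢; linarith [hc]
  have htend : Filter.Tendsto (fun n : ℕ => Real.log (Real.sqrt 2 * Stirling.stirlingSeq (n + (k+1))))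
      Filter.atTop (nhds (Real.log (Real.sqrt 2 * Real.sqrt π))) := by
    have h1 : Filter.Tendsto (fun n : ℕ => Stirling.stirlingSeq (n + (k+1)))
        Filter.atTop (nhds (Real.sqrt π)) :=
      Stirling.tendsto_stirlingSeq_sqrt_pi.comp (Filter.tendsto_add_atTop_nat (k+1))
    have h2 : Filter.Tendsto (fun n : ℕ => Real.sqrt 2 * Stirling.stirlingSeq (n + (k+1)))
        Filter.atTop (nhds (Real.sqrt 2 * Real.sqrt π)) := h1.const_mul _
    exact ((Real.continuousAt_log (by positivity)).tendsto.comp h2)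
  have hlim := ge_of_tendsto htend (Filter.Eventually.of_forall hbd)
  have heq : Real.log (Real.sqrt 2 * Real.sqrt π) = Real.log 2 / 2 + Real.log π / 2 := by
    rw [Real.log_mul (by positivity) (by positivity), Real.log_sqrt (by norm_num),
      Real.log_sqrt pi_pos.le]
  linarith [heq ▸ hlim]

lemma Gamma_eq_exp_phi {x : ℝ} (hx : 0 < x) :
    Real.Gamma (x + 1/2) = Real.exp (phi x) * (x ^ x * Real.exp (-x)) := by
  have hpos : 0 < Real.Gamma (x + 1/2) := Real.Gamma_pos_of_pos (by linarith)
  have hlog : Real.log (Real.Gamma (x + 1/2)) = phi x + x * Real.log x - x := by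
    unfold phi; ring
  have hrpow : (x:ℝ) ^ x = Real.exp (Real.log x * x) := Real.rpow_def_of_pos hx x
  rw [← Real.exp_log hpos, hlog, hrpow, ← Real.exp_add, ← Real.exp_add]
  ring_nf

lemma Gamma_half_lb {x : ℝ} (hx : 0 < x) :
    Real.sqrt π * (x ^ x * Real.exp (-x)) ≤ Real.Gamma (x + 1/2) := by
  rw [Gamma_eq_exp_phi hx]
  have h1 : Real.sqrt π ≤ Real.exp (phi x) := by
    have : Real.sqrt π = Real.exp (Real.log π / 2) := by
      rw [← Real.log_sqrt pi_pos.le, Real.exp_log (by positivity)]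
    rw [this]
    exact Real.exp_le_exp.mpr (phi_lower hx)
  have h2 : (0:ℝ) ≤ x ^ x * Real.exp (-x) := by positivity
  exact mul_le_mul_of_nonneg_right h1 h2

lemma Gamma_half_ub {x : ℝ} (hx : 0 < x) :
    Real.Gamma (x + 1/2) ≤ Real.sqrt 2 * Real.sqrt π * (x ^ x * Real.exp (-x)) := by
  rw [Gamma_eq_exp_phi hx]
  have h1 : Real.exp (phi x) ≤ Real.sqrt 2 * Real.sqrt π := by
    have : Real.sqrt 2 * Real.sqrt π = Real.exp (Real.log 2 / 2 + Real.log π / 2) := by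
      rw [Real.exp_add, ← Real.log_sqrt (by norm_num : (0:ℝ) ≤ 2), ← Real.log_sqrt pi_pos.le,
        Real.exp_log (by positivity), Real.exp_log (by positivity)]
    rw [this]
    exact Real.exp_le_exp.mpr (phi_upper hx)
  have h2 : (0:ℝ) ≤ x ^ x * Real.exp (-x) := by positivity
  exact mul_le_mul_of_nonneg_right h1 h2

lemma gauss_moment (p : ℝ) (hp : 0 ≤ p) :
    ∫ z, |z| ^ p ∂(gaussianReal 0 1) = 2 ^ (p/2) * Gamma ((p+1)/2) / Real.sqrt π := by
  have h1 : gaussianReal 0 1 = volume.withDensity (gaussianPDF 0 1) :=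
    gaussianReal_of_var_ne_zero 0 one_ne_zero
  have hmeas : Measurable (fun x => (gaussianPDFReal 0 1 x).toNNReal) :=
    (measurable_gaussianPDFReal 0 1).real_toNNReal
  have h2 : ∫ z, |z| ^ p ∂(gaussianReal 0 1)
      = ∫ x, gaussianPDFReal 0 1 x * |x| ^ p := by
    rw [h1]
    have : gaussianPDF 0 1 = fun x => ((fun x => (gaussianPDFReal 0 1 x).toNNReal) x : ENNReal) := by
      ext x; simp [gaussianPDF, ENNReal.ofReal]
    rw [this, integral_withDensity_eq_integral_smul hmeas]
    refine integral_congr_ae (Filter.Eventually.of_forall fun x => ?_)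
    simp [NNReal.smul_def, Real.coe_toNNReal _ (gaussianPDFReal_nonneg 0 1 x)]
  have h3 : ∀ x : ℝ, gaussianPDFReal 0 1 x * |x| ^ p
      = (Real.sqrt (2*π))⁻¹ * ((fun t => t ^ p * rexp (-(1/2) * t ^ (2:ℝ))) |x|) := by
    intro x
    simp only [gaussianPDFReal_def]
    rw [Real.rpow_two, sq_abs, ← Real.rpow_two]
    push_cast
    ring_nf
    rw [Real.rpow_two]
    ring_nf
  have h4 := integral_comp_abs (f := fun t => t ^ p * rexp (-(1/2) * t ^ (2:ℝ)))
  rw [h2]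
  calc ∫ x, gaussianPDFReal 0 1 x * |x| ^ p
      = ∫ x, (Real.sqrt (2*π))⁻¹ * ((fun t => t ^ p * rexp (-(1/2) * t ^ (2:ℝ))) |x|) :=
        integral_congr_ae (Filter.Eventually.of_forall h3)
    _ = (Real.sqrt (2*π))⁻¹ * ∫ x, (fun t => t ^ p * rexp (-(1/2) * t ^ (2:ℝ))) |x| :=
        integral_const_mul _ _
    _ = (Real.sqrt (2*π))⁻¹ * (2 * ∫ t in Ioi (0:ℝ), t ^ p * rexp (-(1/2) * t ^ (2:ℝ))) := by rw [h4]
    _ = 2 ^ (p/2) * Gamma ((p+1)/2) / Real.sqrt π := ?_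
  rw [integral_rpow_mul_exp_neg_mul_rpow two_pos (by linarith) (by norm_num)]
  rw [show ((1:ℝ)/2) ^ (-(p+1)/2) = 2 ^ ((p+1)/2) by
    rw [one_div, ← Real.rpow_neg_one 2, ← Real.rpow_mul (by norm_num : (0:ℝ) ≤ 2)]
    norm_num
    ring_nf]
  rw [Real.sqrt_mul (by norm_num) π]
  rw [show (2:ℝ) ^ ((p+1)/2) = 2 ^ (p/2) * 2 ^ ((1:ℝ)/2) by
    rw [← Real.rpow_add two_pos]; ring_nf]
  rw [← Real.sqrt_eq_rpow]
  have h2pos : (0:ℝ) < Real.sqrt 2 := by positivity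
  have hppos : (0:ℝ) < Real.sqrt π := Real.sqrt_pos.mpr pi_pos
  field_simp

theorem stmt_7 (p : ℝ) (hp : 0 ≤ p) :
    (p / Real.exp 1) ^ (p / 2) ≤ ∫ z, |z| ^ p ∂(gaussianReal 0 1) ∧
    ∫ z, |z| ^ p ∂(gaussianReal 0 1) ≤ Real.sqrt 2 * (p / Real.exp 1) ^ (p / 2) := by
  rcases eq_or_lt_of_le hp with h0 | hppos
  · subst h0
    have hint : ∫ z, |z| ^ (0:ℝ) ∂(gaussianReal 0 1) = 1 := by
      simp only [Real.rpow_zero]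
      simp
    rw [show (0:ℝ)/2 = 0 by norm_num, Real.rpow_zero, hint]
    refine ⟨le_refl 1, ?_⟩
    rw [mul_one]
    nlinarith [Real.sq_sqrt (show (0:ℝ) ≤ 2 by norm_num), Real.sqrt_nonneg 2]
  · set x : ℝ := p / 2 with hx
    have hxpos : 0 < x := by positivity
    have hmom := gauss_moment p hp
    have hx12 : (p+1)/2 = x + 1/2 := by rw [hx]; ring
    rw [hx12] at hmom
    set A : ℝ := x ^ x * Real.exp (-x) with hA
    have hlhs : (p / Real.exp 1) ^ (p / 2) = 2 ^ x * A := by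
      have hpe : p / Real.exp 1 = 2 * (x / Real.exp 1) := by rw [hx]; field_simp
      rw [show p/2 = x from rfl, hpe, Real.mul_rpow (by norm_num) (by positivity),
        Real.div_rpow hxpos.le (Real.exp_pos 1).le, Real.exp_one_rpow,
        hA, Real.exp_neg]
      ring
    have h2x : (0:ℝ) < 2 ^ x := Real.rpow_pos_of_pos (by norm_num) x
    have hsp : (0:ℝ) < Real.sqrt π := Real.sqrt_pos.mpr pi_pos
    have hApos : (0:ℝ) ≤ A := by rw [hA]; positivity
    constructor
    · rw [hmom, hlhs]
      have h := Gamma_half_lb hxpos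
      rw [hA] at *
      have h2 : x ^ x * Real.exp (-x) ≤ Real.Gamma (x + 1/2) / Real.sqrt π :=
        (le_div_iff₀ hsp).mpr (by linarith)
      calc 2 ^ x * (x ^ x * Real.exp (-x)) ≤ 2 ^ x * (Real.Gamma (x + 1/2) / Real.sqrt π) :=
            mul_le_mul_of_nonneg_left h2 h2x.le
        _ = 2 ^ x * Real.Gamma (x + 1/2) / Real.sqrt π := by ring
    · rw [hmom, hlhs]
      have h := Gamma_half_ub hxpos
      rw [hA] at *
      have h2 : Real.Gamma (x + 1/2) / Real.sqrt π ≤ Real.sqrt 2 * (x ^ x * Real.exp (-x)) := by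
        rw [div_le_iff₀ hsp]
        calc Real.Gamma (x + 1/2) ≤ Real.sqrt 2 * Real.sqrt π * (x ^ x * Real.exp (-x)) := h
          _ = Real.sqrt 2 * (x ^ x * Real.exp (-x)) * Real.sqrt π := by ring
      calc 2 ^ x * Real.Gamma (x + 1/2) / Real.sqrt π
            = 2 ^ x * (Real.Gamma (x + 1/2) / Real.sqrt π) := by ring
        _ ≤ 2 ^ x * (Real.sqrt 2 * (x ^ x * Real.exp (-x))) :=
            mul_le_mul_of_nonneg_left h2 h2x.le
        _ = Real.sqrt 2 * (2 ^ x * (x ^ x * Real.exp (-x))) := by ring
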